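/- (Dual characteristic spans are reversed.) Under the identification of characteristic spans via the greedy/shortest-span property: if (a,b] is a characteristic span of C (the shortest span of a nonzero codeword of C starting at a), then (b,a] is a characteristic span of the dual code C^⊥; more precisely, the multiset of characteristic spans of C^⊥ equals { (b_l, a_l] : l = 1,...,n } where {(a_l,b_l]} are the characteristic spans of C. -/

import Mathlib

def circIoc {n : ℕ} (a b : ZMod n) : Set (ZMod n) :=
  {x | 1 ≤ (x - a).val ∧ (x - a).val ≤ (b - a).val}

def circIcc {n : ℕ} (a b : ZMod n) : Set (ZMod n) :=
  {x | (x - a).val ≤ (b - a).val}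

def IsSpan {n : ℕ} {F : Type*} [Field F] (c : ZMod n → F) (a b : ZMod n) : Prop :=
  c a ≠ 0 ∧ c b ≠ 0 ∧ ∀ j, c j ≠ 0 → j ∈ circIcc a b

section Helpers
variable {F : Type*} [Field F] {n : ℕ} [NeZero n]

lemma kv_val_inj {x y : ZMod n} (h : x.val = y.val) : x = y := by
  rw [← ZMod.natCast_zmod_val x, ← ZMod.natCast_zmod_val y, h]

lemma kv_toDual_apply (y x : ZMod n → F) :
    (Pi.basisFun F (ZMod n)).toDual y x = ∑ j, x j * y j := by
  have hx : x = ∑ j, x j • (Pi.basisFun F (ZMod n)) j := by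
    funext i
    simp [Pi.basisFun_apply, Finset.sum_apply, Pi.single_apply, mul_ite]
  conv_lhs => rw [hx]
  rw [map_sum]
  refine Finset.sum_congr rfl fun j _ => ?_
  rw [map_smul, smul_eq_mul, Module.Basis.toDual_apply_left, Pi.basisFun_repr]

lemma kv_mem_of_forall_ortho (U : Submodule F (ZMod n → F)) (x : ZMod n → F)
    (h : ∀ y : ZMod n → F, (∀ u ∈ U, ∑ j, u j * y j = 0) → ∑ j, x j * y j = 0) : x ∈ U := by
  have hUU := Subspace.dualAnnihilator_dualCoannihilator_eq (W := U)
  rw [← hUU, Submodule.mem_dualCoannihilator]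
  intro φ hφ
  obtain ⟨y, rfl⟩ := (Pi.basisFun F (ZMod n)).toDualEquiv.surjective φ
  rw [Submodule.mem_dualAnnihilator] at hφ
  have h2 := h y (fun u hu => by
    have := hφ u hu
    rwa [Module.Basis.toDualEquiv_apply, kv_toDual_apply] at this)
  rw [Module.Basis.toDualEquiv_apply, kv_toDual_apply]
  exact h2

lemma kv_sum_single (b : ZMod n) (y : ZMod n → F) :
    ∑ j, (Pi.single b 1 : ZMod n → F) j * y j = y b := by
  rw [Finset.sum_eq_single b (fun j _ hj => by simp [Pi.single_apply, hj]) (by simp)]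
  simp

lemma kv_exists_span (c : ZMod n → F) (a : ZMod n) (m : ℕ)
    (ha : c a ≠ 0) (hm : ∀ j, c j ≠ 0 → (j - a).val ≤ m) :
    ∃ b', IsSpan c a b' ∧ (b' - a).val ≤ m := by
  classical
  obtain ⟨b', hb'mem, hb'max⟩ := Finset.exists_max_image
    (Finset.univ.filter fun j => c j ≠ 0) (fun j => (j - a).val) ⟨a, by simp [ha]⟩
  simp only [Finset.mem_filter, Finset.mem_univ, true_and] at hb'mem hb'max
  refine ⟨b', ⟨ha, hb'mem, fun j hj => ?_⟩, hm _ hb'mem⟩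
  exact hb'max j (by simp [hj])

lemma kv_single_term (a b b' : ZMod n) (hab : a ≠ b) (c y : ZMod n → F)
    (hc : ∀ j, c j ≠ 0 → (j - a).val ≤ (b - a).val)
    (hy : ∀ j, y j ≠ 0 → (j - b).val ≤ (b' - b).val)
    (hlt : (b' - b).val < (a - b).val)
    (hsum : ∑ j, c j * y j = 0) : c b * y b = 0 := by
  rw [← hsum]
  symm
  apply Finset.sum_eq_single b ?_ (by simp)
  intro j _ hjb
  by_contra hne
  have hcj : c j ≠ 0 := fun h => hne (by simp [h])
  have hyj : y j ≠ 0 := fun h => hne (by simp [h])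
  have hba : b - a ≠ 0 := sub_ne_zero.mpr (Ne.symm hab)
  have hL1 : 1 ≤ (b - a).val :=
    Nat.one_le_iff_ne_zero.mpr (fun h => hba ((ZMod.val_eq_zero _).mp h))
  have hLn : (b - a).val < n := ZMod.val_lt _
  have hvalab : (a - b).val = n - (b - a).val := by
    rw [← neg_sub, ZMod.neg_val]
    simp [hba]
  have hu : (j - a).val ≤ (b - a).val := hc j hcj
  have huL : (j - a).val ≠ (b - a).val := by
    intro h
    exact hjb (sub_left_inj.mp (kv_val_inj h))
  have hv : (j - b).val ≤ (b' - b).val := hy j hyj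
  have hjb' : j - b = (j - a) + (a - b) := by ring
  have hval : (j - b).val = ((j - a).val + (a - b).val) % n := by
    rw [hjb', ZMod.val_add]
  rw [hvalab, Nat.mod_eq_of_lt (by omega)] at hval
  omega

/-- Minimality consequence: a codeword supported in `[a,b]` vanishing at `a`
also vanishes at `b`, when `(a,b]` is the characteristic span at `a`. -/
lemma kv_claimB (C : Submodule F (ZMod n → F)) (a b : ZMod n)
    (hL1 : 1 ≤ (b - a).val)
    (c₀ : ZMod n → F) (hc₀C : c₀ ∈ C) (hc₀a : c₀ a ≠ 0)
    (hmin : ∀ c ∈ C, c ≠ 0 → ∀ b', IsSpan c a b' → (b - a).val ≤ (b' - a).val)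
    (c : ZMod n → F) (hcC : c ∈ C)
    (hsupp : ∀ j, c j ≠ 0 → (j - a).val ≤ (b - a).val)
    (hc₀supp : ∀ j, c₀ j ≠ 0 → (j - a).val ≤ (b - a).val)
    (hca : c a = 0) : c b = 0 := by
  by_contra hcb
  set c'' : ZMod n → F := c₀ - (c₀ b / c b) • c with hc''
  have hc''C : c'' ∈ C := Submodule.sub_mem C hc₀C (Submodule.smul_mem C _ hcC)
  have hc''a : c'' a = c₀ a := by simp [hc'', hca]
  have hc''b : c'' b = 0 := by
    simp only [hc'', Pi.sub_apply, Pi.smul_apply, smul_eq_mul]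
    field_simp
    simp
  have hc''supp : ∀ j, c'' j ≠ 0 → (j - a).val ≤ (b - a).val - 1 := by
    intro j hj
    have hle : (j - a).val ≤ (b - a).val := by
      by_contra h
      have h1 : c₀ j = 0 := by
        by_contra h'; exact h (hc₀supp j h')
      have h2 : c j = 0 := by
        by_contra h'; exact h (hsupp j h')
      exact hj (by simp [hc'', h1, h2])
    have hne : (j - a).val ≠ (b - a).val := by
      intro h
      have : j = b := sub_left_inj.mp (kv_val_inj h)
      rw [this] at hj
      exact hj hc''b
    omega
  obtain ⟨b'', hspan'', hb''⟩ :=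
    kv_exists_span c'' a ((b - a).val - 1) (by rw [hc''a]; exact hc₀a) hc''supp
  have hne'' : c'' ≠ 0 := fun h => hc₀a (by rw [← hc''a, h]; rfl)
  have := hmin c'' hc''C hne'' b'' hspan''
  omega

end Helpers

/-- Koetter–Vardy: the characteristic spans of the dual code are the reversed
characteristic spans of the code. With `bC a` (resp. `bD a`) the endpoint of the
characteristic (shortest) span of `C` (resp. of `C^⊥`) starting at `a`, the map
`bC` is a bijection and `bD (bC a) = a` for all `a`; i.e., the characteristic span
list of `C^⊥` is `[(b_a, a] : a]` up to reordering. -/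
theorem stmt13 (F : Type*) [Field F] (n : ℕ) [NeZero n]
    (C D : Submodule F (ZMod n → F))
    (hD : ∀ y, y ∈ D ↔ ∀ c ∈ C, ∑ j, c j * y j = 0)
    (hsuppC : ∀ j, ∃ c ∈ C, c j ≠ 0)
    (hsuppD : ∀ j, ∃ y ∈ D, y j ≠ 0)
    (bC bD : ZMod n → ZMod n)
    (hbC : ∀ a, (∃ c ∈ C, c ≠ 0 ∧ IsSpan c a (bC a)) ∧
      ∀ c ∈ C, c ≠ 0 → ∀ b', IsSpan c a b' → (bC a - a).val ≤ (b' - a).val)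
    (hbD : ∀ a, (∃ y ∈ D, y ≠ 0 ∧ IsSpan y a (bD a)) ∧
      ∀ y ∈ D, y ≠ 0 → ∀ b', IsSpan y a b' → (bD a - a).val ≤ (b' - a).val) :
    Function.Bijective bC ∧ ∀ a, bD (bC a) = a := by
  have main : ∀ a, bD (bC a) = a := by
    intro a
    set b := bC a with hb
    obtain ⟨c₀, hc₀C, hc₀ne, hc₀a, hc₀b, hc₀supp⟩ := (hbC a).1
    have hc₀supp' : ∀ j, c₀ j ≠ 0 → (j - a).val ≤ (b - a).val := fun j h => hc₀supp j h
    -- a ≠ b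
    have hab : a ≠ b := by
      intro h
      obtain ⟨y, hyD, hya⟩ := hsuppD a
      have h0 : ∑ j, c₀ j * y j = 0 := (hD y).mp hyD c₀ hc₀C
      have hsum : ∑ j, c₀ j * y j = c₀ a * y a := by
        apply Finset.sum_eq_single a ?_ (by simp)
        intro j _ hja
        have hcj : c₀ j = 0 := by
          by_contra hc
          have h2 := hc₀supp' j hc
          rw [← h, sub_self, ZMod.val_zero] at h2
          have h3 : j - a = 0 := (ZMod.val_eq_zero _).mp (Nat.le_zero.mp h2)
          exact hja (sub_eq_zero.mp h3)
        simp [hcj]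
      rw [hsum] at h0
      rcases mul_eq_zero.mp h0 with h' | h'
      · exact hc₀a h'
      · exact hya h'
    have hba_ne : b - a ≠ 0 := sub_ne_zero.mpr (Ne.symm hab)
    have hL1 : 1 ≤ (b - a).val :=
      Nat.one_le_iff_ne_zero.mpr (fun h => hba_ne ((ZMod.val_eq_zero _).mp h))
    have hLn : (b - a).val < n := ZMod.val_lt _
    have hvalab : (a - b).val = n - (b - a).val := by
      rw [← neg_sub, ZMod.neg_val]
      simp [hba_ne]
    -- complement characterization
    have hcompl : ∀ j : ZMod n,
        ((j - b).val ≤ (a - b).val ↔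
          ¬(1 ≤ (j - a).val ∧ (j - a).val ≤ (b - a).val - 1)) := by
      intro j
      have hu : (j - a).val < n := ZMod.val_lt _
      have hjb : j - b = (j - a) + (a - b) := by ring
      have hv : (j - b).val = ((j - a).val + (a - b).val) % n := by
        rw [hjb, ZMod.val_add]
      rw [hvalab] at hv
      rcases lt_or_ge (j - a).val (b - a).val with h | h
      · rw [Nat.mod_eq_of_lt (by omega)] at hv
        omega
      · have h2 : (j - a).val + (n - (b - a).val) - n < n := by omega
        rw [Nat.mod_eq_sub_mod (by omega), Nat.mod_eq_of_lt h2] at hv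
        omega
    -- Step (i): existence of a dual word with span within (b, a]
    have hex : ∃ y ∈ D, y b ≠ 0 ∧ ∀ j, y j ≠ 0 → (j - b).val ≤ (a - b).val := by
      by_contra hno
      push_neg at hno
      have H : ∀ y ∈ D,
          (∀ j, 1 ≤ (j - a).val → (j - a).val ≤ (b - a).val - 1 → y j = 0) → y b = 0 := by
        intro y hyD hyT
        by_contra hyb
        obtain ⟨j, hyj, hj⟩ := hno y hyD hyb
        have hT : 1 ≤ (j - a).val ∧ (j - a).val ≤ (b - a).val - 1 := by
          by_contra hT
          have := (hcompl j).mpr hT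
          omega
        exact hyj (hyT j hT.1 hT.2)
      -- coordinate subspace on the open arc strictly between a and b
      let W : Submodule F (ZMod n → F) :=
        { carrier := {v | ∀ j, ¬(1 ≤ (j - a).val ∧ (j - a).val ≤ (b - a).val - 1) → v j = 0}
          add_mem' := fun {v w} hv hw j hj => by
            simp only [Pi.add_apply, hv j hj, hw j hj, add_zero]
          zero_mem' := fun j _ => rfl
          smul_mem' := fun r v hv j hj => by
            simp only [Pi.smul_apply, hv j hj, smul_zero] }
      have hWmem : ∀ v, v ∈ W ↔
          ∀ j, ¬(1 ≤ (j - a).val ∧ (j - a).val ≤ (b - a).val - 1) → v j = 0 := fun v => Iff.rfl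
      have heb : (Pi.single b 1 : ZMod n → F) ∈ C ⊔ W := by
        apply kv_mem_of_forall_ortho
        intro y hy
        rw [kv_sum_single]
        have hyD : y ∈ D := (hD y).mpr fun c hc => hy c (Submodule.mem_sup_left hc)
        apply H y hyD
        intro j h1 h2
        have hjW : (Pi.single j 1 : ZMod n → F) ∈ W := by
          rw [hWmem]
          intro j' hj'
          rcases eq_or_ne j' j with rfl | hne
          · exact absurd ⟨h1, h2⟩ hj'
          · simp [Pi.single_apply, hne]
        have := hy _ (Submodule.mem_sup_right hjW)
        rwa [kv_sum_single] at this
      obtain ⟨c, hcC, w, hwW, hcw⟩ := Submodule.mem_sup.mp heb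
      rw [hWmem] at hwW
      have hwb : w b = 0 := hwW b (by omega)
      have hwa : w a = 0 := hwW a (by simp [sub_self, ZMod.val_zero])
      have hcb : c b = 1 := by
        have := congrFun hcw b
        simp only [Pi.add_apply, Pi.single_eq_same, hwb, add_zero] at this
        exact this
      have hca : c a = 0 := by
        have := congrFun hcw a
        simp only [Pi.add_apply, hwa, add_zero] at this
        rw [this, Pi.single_apply, if_neg hab]
      have hcsupp : ∀ j, c j ≠ 0 → (j - a).val ≤ (b - a).val := by
        intro j hcj
        by_contra hgt
        have hwj : w j = 0 := hwW j (by omega)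
        have hsj : (Pi.single b 1 : ZMod n → F) j = 0 := by
          rw [Pi.single_apply, if_neg]
          intro h
          rw [h] at hgt
          exact hgt le_rfl
        have := congrFun hcw j
        rw [Pi.add_apply, hwj, add_zero, hsj] at this
        exact hcj this
      have := kv_claimB C a b hL1 c₀ hc₀C hc₀a (hbC a).2 c hcC hcsupp hc₀supp' hca
      rw [hcb] at this
      exact one_ne_zero this
    obtain ⟨y, hyD, hyb, hysupp⟩ := hex
    -- upper bound for the characteristic span of D at b
    obtain ⟨b', hspan', hb'le⟩ := kv_exists_span y b ((a - b).val) hyb hysupp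
    have hyne : y ≠ 0 := fun h => hyb (by rw [h]; rfl)
    have hupper : (bD b - b).val ≤ (a - b).val :=
      le_trans ((hbD b).2 y hyD hyne b' hspan') hb'le
    -- lower bound
    obtain ⟨y₀, hy₀D, hy₀ne, hy₀b, hy₀bD, hy₀supp⟩ := (hbD b).1
    have hlower : ¬ (bD b - b).val < (a - b).val := by
      intro hlt
      have h0 := kv_single_term a b (bD b) hab c₀ y₀ hc₀supp'
        (fun j h => hy₀supp j h) hlt ((hD y₀).mp hy₀D c₀ hc₀C)
      rcases mul_eq_zero.mp h0 with h' | h'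
      · exact hc₀b h'
      · exact hy₀b h'
    have heq : (bD b - b).val = (a - b).val := by omega
    have : bD b - b = a - b := kv_val_inj heq
    exact sub_left_inj.mp this
  refine ⟨?_, main⟩
  have hinj : Function.Injective bC := by
    intro x y hxy
    rw [← main x, ← main y, hxy]
  exact (Finite.injective_iff_bijective).mp hinj
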